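/- Let q ≥ 2 and H(z) a Laurent polynomial vector. The LP² matrix Φ_H(z) = [H(z), I − H(z)H*(z)] satisfies Φ_H(z)Φ_H*(z) = I for all z ∈ 𝕋ⁿ if and only if H*(z)H(z) = 1 for all z ∈ 𝕋ⁿ. -/

import Mathlib

open Matrix Complex

/-- Evaluation of a Laurent polynomial in `n` variables with real coefficients
(given by its finitely supported coefficient family `c`) at `z ∈ ℂⁿ`. -/
noncomputable def lEval {n : ℕ} (c : (Fin n → ℤ) →₀ ℝ) (z : Fin n → ℂ) : ℂ :=
  ∑ m ∈ c.support, (c m : ℂ) * ∏ i, z i ^ m i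

/-- The LP² matrix `Φ_H(z) = [H(z), I − H(z)H*(z)]` associated with the Laurent
polynomial vector `H` with coefficient families `c j`; here
`H*(z) = [H₀(z⁻¹), …, H_{q−1}(z⁻¹)]`. -/
noncomputable def PhiL {n q : ℕ} (c : Fin q → ((Fin n → ℤ) →₀ ℝ))
    (z : Fin n → ℂ) : Matrix (Fin q) (Fin (q + 1)) ℂ :=
  Matrix.of fun i j =>
    if hj : j = 0 then lEval (c i) z
    else (if i = j.pred hj then (1 : ℂ) else 0) -
      lEval (c i) z * lEval (c (j.pred hj)) (fun i' => (z i')⁻¹)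

/-- The conjugate transpose `Φ_H*(z)` of the Laurent polynomial matrix
`Φ_H(z)`: its entries are the entries of `Φ_H` with `z` replaced by `z⁻¹`,
transposed. -/
noncomputable def PhiLstar {n q : ℕ} (c : Fin q → ((Fin n → ℤ) →₀ ℝ))
    (z : Fin n → ℂ) : Matrix (Fin (q + 1)) (Fin q) ℂ :=
  (PhiL c (fun i => (z i)⁻¹)).transpose

lemma lEval_contOn {n : ℕ} (c : (Fin n → ℤ) →₀ ℝ) :
    ContinuousOn (lEval c) {z : Fin n → ℂ | ∀ i, z i ≠ 0} := by
  apply continuousOn_finset_sum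
  intro m _
  apply ContinuousOn.mul continuousOn_const
  apply continuousOn_finset_prod
  intro i _
  intro z hz
  exact (ContinuousAt.zpow₀ (continuous_apply i).continuousAt (m i)
    (Or.inl (hz i))).continuousWithinAt

lemma lEval_inv_eq_conj {n : ℕ} (c : (Fin n → ℤ) →₀ ℝ) (z : Fin n → ℂ)
    (hz : ∀ i, ‖z i‖ = 1) :
    lEval c (fun i => (z i)⁻¹) = starRingEnd ℂ (lEval c z) := by
  unfold lEval
  rw [map_sum]
  refine Finset.sum_congr rfl fun m _ => ?_
  rw [_root_.map_mul, map_prod, Complex.conj_ofReal]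
  refine congrArg _ (Finset.prod_congr rfl fun i _ => ?_)
  show (z i)⁻¹ ^ m i = (starRingEnd ℂ) (z i ^ m i)
  rw [map_zpow₀, Complex.inv_eq_conj (hz i)]

lemma torus_preconnected (n : ℕ) :
    IsPreconnected {z : Fin n → ℂ | ∀ i, ‖z i‖ = 1} := by
  have h : {z : Fin n → ℂ | ∀ i, ‖z i‖ = 1} =
      (fun θ : Fin n → ℝ => fun i => Complex.exp (θ i * Complex.I)) '' Set.univ := by
    ext z
    constructor
    · intro hz
      refine ⟨fun i => Complex.arg (z i), trivial, funext fun i => ?_⟩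
      have := Complex.norm_mul_exp_arg_mul_I (z i)
      rw [show ‖z i‖ = 1 from hz i] at this
      simpa using this
    · rintro ⟨θ, -, rfl⟩ i
      simp [Complex.norm_exp]
  rw [h]
  exact isPreconnected_univ.image _ (Continuous.continuousOn (by
    exact continuous_pi fun i => Complex.continuous_exp.comp
      ((Complex.continuous_ofReal.comp (continuous_apply i)).mul continuous_const)))

lemma entry_formula {n q : ℕ} (c : Fin q → ((Fin n → ℤ) →₀ ℝ)) (z : Fin n → ℂ)
    (i k : Fin q) :
    (PhiL c z * PhiLstar c z) i k =
      (if i = k then 1 else 0) +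
        lEval (c i) z * lEval (c k) (fun i' => (z i')⁻¹) *
          ((∑ j, lEval (c j) (fun i' => (z i')⁻¹) * lEval (c j) z) - 1) := by
  have hinv : (fun i' => ((fun i'' => (z i'')⁻¹) i')⁻¹) = z := funext fun i' => inv_inv (z i')
  set a : Fin q → ℂ := fun j => lEval (c j) z with ha
  set b : Fin q → ℂ := fun j => lEval (c j) (fun i' => (z i')⁻¹) with hb
  have key : ∀ j : Fin (q+1), PhiL c z i j * PhiLstar c z j k =
      (if hj : j = 0 then a i * b k
       else ((if i = j.pred hj then (1:ℂ) else 0) - a i * b (j.pred hj)) *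
            ((if k = j.pred hj then (1:ℂ) else 0) - b k * a (j.pred hj))) := by
    intro j
    by_cases hj : j = 0
    · subst hj
      simp [PhiL, PhiLstar, Matrix.transpose_apply]
      rfl
    · simp only [PhiL, PhiLstar, Matrix.transpose_apply, Matrix.of_apply, dif_neg hj]
      rw [hinv]
  rw [Matrix.mul_apply]
  rw [Finset.sum_congr rfl fun j _ => key j]
  rw [Fin.sum_univ_succ]
  simp only [dif_pos rfl, Fin.succ_ne_zero, dif_neg, not_false_iff, Fin.pred_succ]
  have expand : ∀ j : Fin q,
      ((if i = j then (1:ℂ) else 0) - a i * b j) * ((if k = j then (1:ℂ) else 0) - b k * a j)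
      = (if i = j then (if k = j then (1:ℂ) else 0) else 0)
        - (if i = j then b k * a j else 0)
        - (if k = j then a i * b j else 0)
        + a i * b k * (b j * a j) := by
    intro j
    by_cases h1 : i = j <;> by_cases h2 : k = j <;> simp [h1, h2] <;> ring
  rw [Finset.sum_congr rfl fun j _ => expand j]
  simp only [Finset.sum_add_distrib, Finset.sum_sub_distrib, Finset.sum_ite_eq,
    Finset.mem_univ, if_true, ← Finset.mul_sum]
  by_cases hik : i = k
  · subst hik; simp; ring
  · simp [hik, Ne.symm hik]; ring

/-- for a (nonzero) Laurent polynomial vector `H`, the LP² matrix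
satisfies `Φ_H(z) Φ_H*(z) = I` for all `z ∈ 𝕋ⁿ` if and only if
`H*(z)H(z) = 1` for all `z ∈ 𝕋ⁿ`. -/
theorem lp2_paraunitary_iff (n q : ℕ) (hq : 2 ≤ q)
    (c : Fin q → ((Fin n → ℤ) →₀ ℝ))
    (hne : ∃ z : Fin n → ℂ, (∀ i, ‖z i‖ = 1) ∧ ∃ j, lEval (c j) z ≠ 0) :
    (∀ z : Fin n → ℂ, (∀ i, ‖z i‖ = 1) → PhiL c z * PhiLstar c z = 1) ↔
    (∀ z : Fin n → ℂ, (∀ i, ‖z i‖ = 1) →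
      ∑ j, lEval (c j) (fun i => (z i)⁻¹) * lEval (c j) z = 1) := by
  set T : Set (Fin n → ℂ) := {z | ∀ i, ‖z i‖ = 1} with hT
  set S : (Fin n → ℂ) → ℂ :=
    fun z => ∑ j, lEval (c j) (fun i => (z i)⁻¹) * lEval (c j) z with hSdef
  constructor
  · intro hΦ
    -- dichotomy
    have hdich : ∀ z ∈ T, S z = 0 ∨ S z = 1 := by
      intro z hz
      have h1 := hΦ z hz
      have h2 : ∀ i : Fin q,
          lEval (c i) z * lEval (c i) (fun i' => (z i')⁻¹) * (S z - 1) = 0 := by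
        intro i
        have h3 := congrFun (congrFun h1 i) i
        rw [entry_formula c z i i] at h3
        simpa [Matrix.one_apply] using h3
      have h3 : S z * (S z - 1) = 0 := by
        have h4 : ∑ i, lEval (c i) z * lEval (c i) (fun i' => (z i')⁻¹) * (S z - 1) = 0 :=
          Finset.sum_eq_zero fun i _ => h2 i
        rw [← Finset.sum_mul] at h4
        have h5 : S z = ∑ i, lEval (c i) z * lEval (c i) fun i' => (z i')⁻¹ :=
          Finset.sum_congr rfl fun j _ => mul_comm _ _
        rw [h5] at h4 ⊢
        exact h4
      rcases mul_eq_zero.1 h3 with h | h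
      · exact Or.inl h
      · exact Or.inr (by linear_combination h)
    have hSre : ∀ z ∈ T, S z = ((∑ j, Complex.normSq (lEval (c j) z) : ℝ) : ℂ) := by
      intro z hz
      rw [hSdef]
      push_cast
      refine Finset.sum_congr rfl fun j _ => ?_
      rw [lEval_inv_eq_conj _ z hz, mul_comm, Complex.mul_conj]
    obtain ⟨z₀, hz₀T, j₀, hj₀⟩ := hne
    have hz₀1 : S z₀ = 1 := by
      rcases hdich z₀ hz₀T with h | h
      · exfalso
        rw [hSre z₀ hz₀T] at h
        have h5 : (∑ j, Complex.normSq (lEval (c j) z₀)) = 0 := by exact_mod_cast h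
        have h6 := (Finset.sum_eq_zero_iff_of_nonneg
          (fun j _ => Complex.normSq_nonneg _)).1 h5 j₀ (Finset.mem_univ _)
        exact hj₀ (Complex.normSq_eq_zero.1 h6)
      · exact h
    intro z hzT
    by_contra hcontra
    have hz0 : S z = 0 := (hdich z hzT).resolve_right hcontra
    -- continuity of re ∘ S on T
    have hTsub : T ⊆ {w : Fin n → ℂ | ∀ i, w i ≠ 0} := by
      intro w hw i h0
      have := hw i
      rw [h0] at this
      simp at this
    have hScont : ContinuousOn S {w : Fin n → ℂ | ∀ i, w i ≠ 0} := by
      apply continuousOn_finset_sum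
      intro j _
      apply ContinuousOn.mul
      · apply ContinuousOn.comp (lEval_contOn (c j))
        · exact continuousOn_pi.2 fun i =>
            ((continuous_apply i).continuousOn).inv₀ fun w hw => hw i
        · intro w hw i
          exact inv_ne_zero (hw i)
      · exact lEval_contOn (c j)
    have hFcont : ContinuousOn (fun w => (S w).re) T :=
      (Complex.continuous_re.comp_continuousOn (hScont.mono hTsub))
    have himg : IsPreconnected ((fun w => (S w).re) '' T) :=
      (torus_preconnected n).image _ hFcont
    have h0 : (0:ℝ) ∈ (fun w => (S w).re) '' T := ⟨z, hzT, by show (S z).re = 0; rw [hz0]; simp⟩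
    have h1 : (1:ℝ) ∈ (fun w => (S w).re) '' T := ⟨z₀, hz₀T, by show (S z₀).re = 1; rw [hz₀1]; simp⟩
    have hmid : (1/2 : ℝ) ∈ (fun w => (S w).re) '' T :=
      himg.Icc_subset h0 h1 (by norm_num)
    obtain ⟨w, hwT, hw⟩ := hmid
    have hw' : (S w).re = 1/2 := hw
    rcases hdich w hwT with h | h <;> rw [h] at hw' <;> norm_num at hw'
  · intro hS z hz
    ext i k
    rw [entry_formula c z i k, hS z hz]
    simp [Matrix.one_apply]
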